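/- Let I be a finite set, G the free abelian group on I, χ : G × G → ℤ a ℤ-bilinear form, and (p_i), (s_i) two bases of G with χ(p_i, s_j) = δ_{ij}. Then the sum over all i, j of the entries of the inverse of the matrix (χ(p_i, p_j)) equals χ(s, s), where s = Σ_{i∈I} s_i. -/

import Mathlib

/-- With `(p i)`, `(s i)` bases of a free abelian group and a bilinear
form `χ` with `χ (p i) (s j) = δᵢⱼ`, the matrix `Z i j = χ (p i) (p j)` is invertible
and the sum of the entries of its inverse is `χ s s` where `s = Σᵢ sᵢ`. -/
theorem magnitude_eq_euler_form
    (I : Type) [Fintype I] [DecidableEq I]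
    (G : Type) [AddCommGroup G]
    (p s : Module.Basis I ℤ G)
    (χ : G →ₗ[ℤ] G →ₗ[ℤ] ℤ)
    (hps : ∀ i j, χ (p i) (s j) = if i = j then 1 else 0)
    (Z : Matrix I I ℤ)
    (hZ : ∀ i j, Z i j = χ (p i) (p j)) :
    ∃ W : Matrix I I ℤ, Z * W = 1 ∧ W * Z = 1 ∧
      ∑ i, ∑ j, W i j = χ (∑ i, s i) (∑ i, s i) := by
  have hχ : ∀ (i : I) (x : G), χ (p i) x = s.repr x i := by
    intro i x
    conv_lhs => rw [← s.sum_repr x]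
    simp [map_sum, hps, Finsupp.sum, -Module.Basis.sum_repr]
  have hZeq : Z = s.toMatrix p := by
    ext i j
    rw [hZ, hχ, Module.Basis.toMatrix_apply]
  refine ⟨p.toMatrix s, ?_, ?_, ?_⟩
  · rw [hZeq, Module.Basis.toMatrix_mul_toMatrix_flip]
  · rw [hZeq, Module.Basis.toMatrix_mul_toMatrix_flip]
  · have hss : ∀ i j : I, χ (s i) (s j) = p.toMatrix s j i := by
      intro i j
      conv_lhs => rw [← p.sum_repr (s i)]
      simp [map_sum, hps, Finsupp.sum, Module.Basis.toMatrix_apply, -Module.Basis.sum_repr]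
    simp only [map_sum, LinearMap.coe_sum, Finset.sum_apply, LinearMap.sum_apply, hss]
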